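/- arXiv:2302.04749 — 6 statements merged into one kernel-verified Lean document; each statement's English description precedes it below -/
import Mathlib

section
/- Let X and Y be nonempty finite sets with |X| ≥ 2, and let (h_i)_{i∈I} be a pairwise-independent hash family from X to Y indexed by a nonempty finite set I. Then for every subset S ⊆ X and every y ∈ Y, the fraction of indices i ∈ I for which S ∩ h_i⁻¹(y) is nonempty is at least |S|/|Y| − |S|²/(2|Y|²); that is, |{i ∈ I : ∃ x ∈ S, h_i(x) = y}| ≥ |I| · (|S|/|Y| − |S|²/(2|Y|²)). -/
open Finset

/-- Pairwise-independent hash family lower bound for nonempty intersection: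
`Pr_i[S ∩ h_i⁻¹(y) ≠ ∅] ≥ |S|/|Y| − |S|²/(2|Y|²)`. -/
theorem stmt_0 {X Y I : Type*} [Fintype X] [Fintype Y] [Fintype I]
    [DecidableEq X] [DecidableEq Y]
    [Nonempty X] [Nonempty Y] [Nonempty I]
    (hX : 2 ≤ Fintype.card X)
    (h : I → X → Y)
    (hpair : ∀ x x' : X, x ≠ x' → ∀ y y' : Y,
      (univ.filter (fun i : I => h i x = y ∧ h i x' = y')).card * (Fintype.card Y) ^ 2
        = Fintype.card I)
    (S : Finset X) (y : Y) :
    (Fintype.card I : ℝ) *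
        ((S.card : ℝ) / (Fintype.card Y : ℝ)
          - (S.card : ℝ) ^ 2 / (2 * (Fintype.card Y : ℝ) ^ 2))
      ≤ ((univ.filter (fun i : I => ∃ x ∈ S, h i x = y)).card : ℝ) := by
  classical
  have hqpos : 0 < Fintype.card Y := Fintype.card_pos
  have hq : (0:ℝ) < (Fintype.card Y : ℝ) := by exact_mod_cast hqpos
  have hN : (0:ℝ) ≤ (Fintype.card I : ℝ) := by positivity
  -- single event count
  have hsingle : ∀ x : X,
      (univ.filter (fun i : I => h i x = y)).card * Fintype.card Y = Fintype.card I := by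
    intro x
    obtain ⟨x', hx'⟩ := Fintype.exists_ne_of_one_lt_card (by omega) x
    have hfib : (univ.filter (fun i : I => h i x = y)).card
        = ∑ y' : Y, ((univ.filter (fun i : I => h i x = y)).filter
            (fun i => h i x' = y')).card :=
      Finset.card_eq_sum_card_fiberwise (fun i _ => mem_univ _)
    have hfi : ∀ y' : Y, ((univ.filter (fun i : I => h i x = y)).filter
        (fun i => h i x' = y')).card * (Fintype.card Y) ^ 2 = Fintype.card I := fun y' => by
      rw [filter_filter]; exact hpair x x' hx'.symm y y'
    have hsq : (univ.filter (fun i : I => h i x = y)).card * (Fintype.card Y) ^ 2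
        = Fintype.card Y * Fintype.card I := by
      calc (univ.filter (fun i : I => h i x = y)).card * (Fintype.card Y) ^ 2
          = ∑ y' : Y, ((univ.filter (fun i : I => h i x = y)).filter
              (fun i => h i x' = y')).card * (Fintype.card Y) ^ 2 := by
            rw [hfib, Finset.sum_mul]
        _ = ∑ _y' : Y, Fintype.card I := Finset.sum_congr rfl (fun y' _ => hfi y')
        _ = Fintype.card Y * Fintype.card I := by simp [Finset.card_univ, mul_comm]
    have : ((univ.filter (fun i : I => h i x = y)).card * Fintype.card Y) * Fintype.card Y
        = Fintype.card I * Fintype.card Y := by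
      rw [mul_assoc, ← pow_two, hsq]; ring
    exact Nat.eq_of_mul_eq_mul_right hqpos this
  -- induction on S
  have main : ∀ S : Finset X,
      (Fintype.card I : ℝ) *
        ((S.card : ℝ) / (Fintype.card Y : ℝ)
          - (S.card : ℝ) * ((S.card : ℝ) - 1) / (2 * (Fintype.card Y : ℝ) ^ 2))
      ≤ ((univ.filter (fun i : I => ∃ x ∈ S, h i x = y)).card : ℝ) := by
    intro S
    induction S using Finset.induction_on with
    | empty => simp
    | @insert a S' ha IH =>
      set A : Finset I := univ.filter (fun i : I => h i a = y) with hA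
      set T : Finset I := univ.filter (fun i : I => ∃ x ∈ S', h i x = y) with hT
      have hsplit : (univ.filter (fun i : I => ∃ x ∈ insert a S', h i x = y)) = A ∪ T := by
        ext i; simp [hA, hT, or_and_right, exists_or]
      have hcardu : ((A ∪ T).card : ℝ) = (A.card : ℝ) + (T.card : ℝ) - ((A ∩ T).card : ℝ) := by
        have := Finset.card_union_add_card_inter A T
        have : ((A ∪ T).card : ℝ) + ((A ∩ T).card : ℝ) = (A.card : ℝ) + (T.card : ℝ) := by
          exact_mod_cast this
        linarith
      -- A ∩ T ⊆ biUnion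
      have hTbi : T = S'.biUnion (fun x => univ.filter (fun i : I => h i x = y)) := by
        ext i; simp [hT]
      have hinter : ((A ∩ T).card : ℝ) ≤ (S'.card : ℝ) * (Fintype.card I : ℝ)
          / (Fintype.card Y : ℝ) ^ 2 := by
        have hsub : A ∩ T ⊆ S'.biUnion (fun x =>
            univ.filter (fun i : I => h i a = y ∧ h i x = y)) := by
          intro i hi
          simp only [hA, hT, mem_inter, mem_filter, mem_univ, true_and] at hi
          obtain ⟨h1, x, hx, h2⟩ := hi
          simp only [mem_biUnion, mem_filter, mem_univ, true_and]
          exact ⟨x, hx, h1, h2⟩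
        have hle : (A ∩ T).card ≤ ∑ x ∈ S',
            (univ.filter (fun i : I => h i a = y ∧ h i x = y)).card :=
          le_trans (Finset.card_le_card hsub) (Finset.card_biUnion_le)
        have hsum : ∀ x ∈ S', ((univ.filter (fun i : I => h i a = y ∧ h i x = y)).card : ℝ)
            = (Fintype.card I : ℝ) / (Fintype.card Y : ℝ) ^ 2 := by
          intro x hx
          have hne : a ≠ x := fun e => ha (e ▸ hx)
          have := hpair a x hne y y
          have : ((univ.filter (fun i : I => h i a = y ∧ h i x = y)).card : ℝ)
              * (Fintype.card Y : ℝ) ^ 2 = (Fintype.card I : ℝ) := by exact_mod_cast this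
          field_simp at this ⊢
          linarith
        calc ((A ∩ T).card : ℝ) ≤ ∑ x ∈ S',
              ((univ.filter (fun i : I => h i a = y ∧ h i x = y)).card : ℝ) := by
              exact_mod_cast hle
          _ = (S'.card : ℝ) * ((Fintype.card I : ℝ) / (Fintype.card Y : ℝ) ^ 2) := by
              rw [Finset.sum_congr rfl hsum]; simp [mul_comm]
          _ = (S'.card : ℝ) * (Fintype.card I : ℝ) / (Fintype.card Y : ℝ) ^ 2 := by ring
      have hAcard : (A.card : ℝ) = (Fintype.card I : ℝ) / (Fintype.card Y : ℝ) := by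
        have := hsingle a
        have : (A.card : ℝ) * (Fintype.card Y : ℝ) = (Fintype.card I : ℝ) := by
          exact_mod_cast this
        field_simp; linarith
      rw [hsplit, Finset.card_insert_of_notMem ha, hcardu]
      push_cast
      set n : ℝ := (S'.card : ℝ) with hn
      have hn0 : 0 ≤ n := by positivity
      set q : ℝ := (Fintype.card Y : ℝ)
      set N : ℝ := (Fintype.card I : ℝ)
      have key : N * ((n + 1) / q - (n + 1) * (n + 1 - 1) / (2 * q ^ 2))
          = N * (n / q - n * (n - 1) / (2 * q ^ 2)) + N / q - n * N / q ^ 2 := by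
        field_simp
        ring
      rw [key]
      linarith [IH]
  refine le_trans ?_ (main S)
  have hn0 : (0:ℝ) ≤ (S.card : ℝ) := by positivity
  have : (S.card : ℝ) * ((S.card : ℝ) - 1) ≤ (S.card : ℝ) ^ 2 := by nlinarith
  have hdiv : (S.card : ℝ) * ((S.card : ℝ) - 1) / (2 * (Fintype.card Y : ℝ) ^ 2)
      ≤ (S.card : ℝ) ^ 2 / (2 * (Fintype.card Y : ℝ) ^ 2) := by
    apply div_le_div_of_nonneg_right this (by positivity) |>.trans_eq rfl
  nlinarith [hdiv, hN]
end

section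
/- Let X and Y be nonempty finite sets with |X| ≥ 2, and let (h_i)_{i∈I} be a pairwise-independent hash family from X to Y indexed by a nonempty finite set I. Then for every subset S ⊆ X and every y ∈ Y, the fraction of indices i ∈ I for which S ∩ h_i⁻¹(y) has exactly one element is at least |S|/|Y| − |S|²/|Y|²; that is, |{i ∈ I : |S ∩ h_i⁻¹(y)| = 1}| ≥ |I| · (|S|/|Y| − |S|²/|Y|²). -/
open Finset

/-- Pairwise-independent hash family lower bound for a unique preimage in `S`:
`Pr_i[|S ∩ h_i⁻¹(y)| = 1] ≥ |S|/|Y| − |S|²/|Y|²`. -/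
theorem stmt_1 {X Y I : Type*} [Fintype X] [Fintype Y] [Fintype I]
    [DecidableEq X] [DecidableEq Y]
    [Nonempty X] [Nonempty Y] [Nonempty I]
    (hX : 2 ≤ Fintype.card X)
    (h : I → X → Y)
    (hpair : ∀ x x' : X, x ≠ x' → ∀ y y' : Y,
      (univ.filter (fun i : I => h i x = y ∧ h i x' = y')).card * (Fintype.card Y) ^ 2
        = Fintype.card I)
    (S : Finset X) (y : Y) :
    (Fintype.card I : ℝ) *
        ((S.card : ℝ) / (Fintype.card Y : ℝ)
          - (S.card : ℝ) ^ 2 / ((Fintype.card Y : ℝ) ^ 2))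
      ≤ ((univ.filter (fun i : I => (S.filter (fun x => h i x = y)).card = 1)).card : ℝ) := by
  classical
  set q := Fintype.card Y with hqdef
  set m := Fintype.card I with hmdef
  have hq0 : 0 < q := Fintype.card_pos
  -- marginal: single point count
  have marg : ∀ x : X, (univ.filter (fun i : I => h i x = y)).card * q = m := by
    intro x
    obtain ⟨x', hx'⟩ := Fintype.exists_ne_of_one_lt_card hX x
    have hcard : (univ.filter (fun i : I => h i x = y)).card
        = ∑ y' : Y, (univ.filter (fun i : I => h i x = y ∧ h i x' = y')).card := by
      rw [Finset.card_eq_sum_card_fiberwise (f := fun i => h i x') (t := univ)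
        (fun i _ => mem_univ _)]
      refine Finset.sum_congr rfl fun y' _ => ?_
      rw [filter_filter]
    have key : (univ.filter (fun i : I => h i x = y)).card * q ^ 2 = q * m := by
      rw [hcard, Finset.sum_mul]
      rw [Finset.sum_congr rfl (fun y' _ => hpair x x' (Ne.symm hx') y y')]
      simp [mul_comm]
      exact Or.inl hqdef.symm
    have key2 : (univ.filter (fun i : I => h i x = y)).card * q * q = m * q := by
      calc (univ.filter (fun i : I => h i x = y)).card * q * q
          = (univ.filter (fun i : I => h i x = y)).card * q ^ 2 := by ring
        _ = q * m := key
        _ = m * q := mul_comm _ _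
    exact Nat.eq_of_mul_eq_mul_right hq0 key2
  -- notation
  set F : I → ℕ := fun i => (S.filter (fun x => h i x = y)).card with hF
  set A := ∑ i : I, F i with hA
  set B := ∑ i : I, F i * F i with hB
  -- sum 1
  have sum1 : A * q = S.card * m := by
    have e1 : A = ∑ x ∈ S, (univ.filter (fun i : I => h i x = y)).card := by
      simp only [hA, hF, Finset.card_filter]
      exact Finset.sum_comm
    rw [e1, Finset.sum_mul, Finset.sum_congr rfl (fun x _ => marg x), Finset.sum_const,
      smul_eq_mul]
  -- sum 2
  have sum2 : B = ∑ x ∈ S, ∑ x' ∈ S,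
      (univ.filter (fun i : I => h i x = y ∧ h i x' = y)).card := by
    have e1 : B = ∑ i : I, ∑ x ∈ S, ∑ x' ∈ S,
        (if h i x = y ∧ h i x' = y then 1 else 0) := by
      simp only [hB, hF, Finset.card_filter]
      refine Finset.sum_congr rfl fun i _ => ?_
      rw [Finset.sum_mul_sum]
      refine Finset.sum_congr rfl fun x _ => Finset.sum_congr rfl fun x' _ => ?_
      split_ifs <;> simp_all
    rw [e1, Finset.sum_comm]
    refine Finset.sum_congr rfl fun x _ => ?_
    rw [Finset.sum_comm]
    refine Finset.sum_congr rfl fun x' _ => ?_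
    rw [Finset.card_filter]
  -- bound on B * q^2
  have sum2q : B * q ^ 2 ≤ S.card * (m * q) + S.card * (S.card * m) := by
    rw [sum2, Finset.sum_mul]
    have hx : ∀ x ∈ S, (∑ x' ∈ S,
        (univ.filter (fun i : I => h i x = y ∧ h i x' = y)).card) * q ^ 2
        ≤ m * q + S.card * m := by
      intro x hxS
      rw [← Finset.add_sum_erase _ _ hxS, add_mul, Finset.sum_mul]
      have diag : (univ.filter (fun i : I => h i x = y ∧ h i x = y)).card * q ^ 2
          = m * q := by
        simp only [and_self]
        calc (univ.filter (fun i : I => h i x = y)).card * q ^ 2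
            = (univ.filter (fun i : I => h i x = y)).card * q * q := by ring
          _ = m * q := by rw [marg x]
      have off : ∑ x' ∈ S.erase x,
          (univ.filter (fun i : I => h i x = y ∧ h i x' = y)).card * q ^ 2
          ≤ S.card * m := by
        calc ∑ x' ∈ S.erase x,
            (univ.filter (fun i : I => h i x = y ∧ h i x' = y)).card * q ^ 2
            = ∑ x' ∈ S.erase x, m := by
              refine Finset.sum_congr rfl fun x' hx' => ?_
              exact hpair x x' (Ne.symm (Finset.ne_of_mem_erase hx')) y y
          _ = (S.erase x).card * m := by rw [Finset.sum_const, smul_eq_mul]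
          _ ≤ S.card * m := Nat.mul_le_mul_right m (Finset.card_le_card (Finset.erase_subset _ _))
      omega
    calc ∑ x ∈ S, (∑ x' ∈ S,
          (univ.filter (fun i : I => h i x = y ∧ h i x' = y)).card) * q ^ 2
        ≤ ∑ x ∈ S, (m * q + S.card * m) := Finset.sum_le_sum hx
      _ = S.card * (m * q + S.card * m) := by rw [Finset.sum_const, smul_eq_mul]
      _ = S.card * (m * q) + S.card * (S.card * m) := by ring
  -- pointwise bound
  have pt : ∀ n : ℕ, 2 * (n : ℝ) - (n : ℝ) ^ 2 ≤ if n = 1 then (1 : ℝ) else 0 := by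
    intro n
    match n with
    | 0 => norm_num
    | 1 => norm_num
    | (k + 2) =>
      have : ((k : ℝ)) ≥ 0 := Nat.cast_nonneg k
      simp only [if_neg (by omega : ¬ k + 2 = 1)]
      push_cast
      nlinarith
  -- main real inequality
  set T := (univ.filter (fun i : I => F i = 1)).card with hT
  have hTreal : 2 * (A : ℝ) - (B : ℝ) ≤ (T : ℝ) := by
    have e : (T : ℝ) = ∑ i : I, (if F i = 1 then (1 : ℝ) else 0) := by
      rw [hT, Finset.card_filter]
      push_cast
      rfl
    rw [e]
    have e2 : 2 * (A : ℝ) - (B : ℝ) = ∑ i : I, (2 * (F i : ℝ) - (F i : ℝ) ^ 2) := by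
      rw [hA, hB]
      push_cast
      rw [Finset.sum_sub_distrib, Finset.mul_sum]
      congr 1
      refine Finset.sum_congr rfl fun i _ => ?_
      ring
    rw [e2]
    exact Finset.sum_le_sum fun i _ => pt (F i)
  -- casts
  have hq0' : (0 : ℝ) < (q : ℝ) := by exact_mod_cast hq0
  have hAr : (A : ℝ) * q = S.card * m := by exact_mod_cast sum1
  have hBr : (B : ℝ) * (q : ℝ) ^ 2 ≤ S.card * (m * q) + S.card * (S.card * m) := by
    exact_mod_cast sum2q
  have goal2 : (m : ℝ) * ((S.card : ℝ) / q - (S.card : ℝ) ^ 2 / (q : ℝ) ^ 2)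
      ≤ 2 * (A : ℝ) - B := by
    rw [show (m : ℝ) * ((S.card : ℝ) / q - (S.card : ℝ) ^ 2 / (q : ℝ) ^ 2)
        = ((m : ℝ) * S.card * q - m * S.card ^ 2) / (q : ℝ) ^ 2 by field_simp]
    rw [div_le_iff₀ (by positivity)]
    nlinarith [hAr, hBr, hq0']
  calc (m : ℝ) * ((S.card : ℝ) / q - (S.card : ℝ) ^ 2 / (q : ℝ) ^ 2)
      ≤ 2 * (A : ℝ) - B := goal2
    _ ≤ (T : ℝ) := hTreal
end

section
/- Let ε be a real number with 0 < ε < 1, let ℓ and m be natural numbers with (1+ε)^m ≥ 2^(ℓ+1), and let a, b be natural numbers with (1−ε)·b < a < (1+ε)·b and a ≤ 2^ℓ. Then there exists a natural number j with 0 ≤ j ≤ m−1 such that, setting k = ⌈(1+ε)^j⌉ (the least integer at least (1+ε)^j), the following hold: k ≤ 2a ≤ (1+ε)·k and k/(1+ε) ≤ 2b ≤ ((1+ε)/(1−ε))·k. -/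
/-- Approximation lemma: for balanced `a, b` with `a ≤ 2^ℓ`, some grid value
`k = ⌈(1+ε)^j⌉` with `0 ≤ j ≤ m−1` approximates both `2a` and `2b`. -/
theorem stmt_4 (ε : ℝ) (hε0 : 0 < ε) (hε1 : ε < 1) (ℓ m : ℕ)
    (hm : (2 : ℝ) ^ (ℓ + 1) ≤ (1 + ε) ^ m)
    (a b : ℕ)
    (hab1 : (1 - ε) * (b : ℝ) < (a : ℝ))
    (hab2 : (a : ℝ) < (1 + ε) * (b : ℝ))
    (ha : a ≤ 2 ^ ℓ) :
    ∃ j : ℕ, j ≤ m - 1 ∧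
      ((⌈(1 + ε) ^ j⌉₊ : ℝ) ≤ 2 * (a : ℝ)
        ∧ 2 * (a : ℝ) ≤ (1 + ε) * (⌈(1 + ε) ^ j⌉₊ : ℝ))
      ∧ ((⌈(1 + ε) ^ j⌉₊ : ℝ) / (1 + ε) ≤ 2 * (b : ℝ)
        ∧ 2 * (b : ℝ) ≤ (1 + ε) / (1 - ε) * (⌈(1 + ε) ^ j⌉₊ : ℝ)) := by
  have hε1' : (0:ℝ) < 1 + ε := by linarith
  have h1ε : (0:ℝ) < 1 - ε := by linarith
  have hb0 : (0:ℝ) ≤ (b:ℝ) := Nat.cast_nonneg b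
  have ha0 : (0:ℝ) < (a:ℝ) :=
    lt_of_le_of_lt (mul_nonneg h1ε.le hb0) hab1
  have ha1 : 1 ≤ a := by
    have : 0 < a := by exact_mod_cast ha0
    omega
  have key : ∀ n : ℕ, ∀ c : ℝ, 1 ≤ c → c ≤ (1+ε)^(n+1) →
      ∃ j ≤ n, (1+ε)^j ≤ c ∧ c ≤ (1+ε)^(j+1) := by
    intro n
    induction n with
    | zero =>
      intro c h1 h2
      exact ⟨0, le_refl 0, by simpa using h1, by simpa using h2⟩
    | succ n ih =>
      intro c h1 h2
      by_cases h : c ≤ (1+ε)^(n+1)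
      · obtain ⟨j, hj, h3, h4⟩ := ih c h1 h
        exact ⟨j, hj.trans (Nat.le_succ n), h3, h4⟩
      · push_neg at h
        exact ⟨n+1, le_refl _, h.le, h2⟩
  have hm1 : 1 ≤ m := by
    by_contra h
    push_neg at h
    interval_cases m
    have h2 : (2:ℝ) ≤ 2^(ℓ+1) := by
      calc (2:ℝ) = 2^1 := (pow_one 2).symm
      _ ≤ 2^(ℓ+1) := by
        apply pow_le_pow_right₀ (by norm_num)
        omega
    simp at hm
    linarith
  obtain ⟨n, rfl⟩ : ∃ n, m = n + 1 := ⟨m - 1, by omega⟩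
  have hc1 : (1:ℝ) ≤ 2 * (a:ℝ) := by
    have : (1:ℝ) ≤ (a:ℝ) := by exact_mod_cast ha1
    linarith
  have hc2 : 2 * (a:ℝ) ≤ (1+ε)^(n+1) := by
    have h2a : (a:ℝ) ≤ 2^ℓ := by exact_mod_cast ha
    calc 2*(a:ℝ) ≤ 2 * 2^ℓ := by linarith
    _ = 2^(ℓ+1) := by ring
    _ ≤ _ := hm
  obtain ⟨j, hj, h3, h4⟩ := key n (2*(a:ℝ)) hc1 hc2
  refine ⟨j, by omega, ?_⟩
  set k : ℝ := (⌈(1+ε)^j⌉₊ : ℝ) with hk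
  have hk1 : (1+ε)^j ≤ k := Nat.le_ceil _
  have hk2 : k ≤ 2*(a:ℝ) := by
    have h := Nat.ceil_le.mpr (show (1+ε)^j ≤ ((2*a : ℕ):ℝ) by push_cast; exact h3)
    rw [hk]
    exact_mod_cast h
  have hupper : 2*(a:ℝ) ≤ (1+ε)*k := by
    calc 2*(a:ℝ) ≤ (1+ε)^(j+1) := h4
    _ = (1+ε)*(1+ε)^j := by ring
    _ ≤ (1+ε)*k := by nlinarith
  refine ⟨⟨hk2, hupper⟩, ?_, ?_⟩
  · rw [div_le_iff₀ hε1']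
    nlinarith
  · rw [div_mul_eq_mul_div, le_div_iff₀ h1ε]
    nlinarith
end

section
/- Let T be a finite index set, let R, X₀, X₁ : T → ℝ be nonnegative functions, and let ε be a real number with 0 < ε < 1. Define T⁺ = {t ∈ T : (1+ε)·X₁(t) ≤ X₀(t)} and T⁻ = {t ∈ T : X₀(t) ≤ (1−ε)·X₁(t)}. Then (1/2)·Σ_{t∈T⁺} R(t)·(X₀(t) − X₁(t)) + (1/2)·Σ_{t∈T⁻} R(t)·(X₁(t) − X₀(t)) ≥ (ε/(4(1+ε)))·Σ_{t∈T⁺∪T⁻} R(t)·(X₀(t) + X₁(t)). -/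
open Finset

/-- Key inequality in the proof that statistical hiding forces nearly-equal consistent-seed
sets: the distinguishing advantage of the receiver lower-bounds the mass of unbalanced
transcripts. -/
theorem stmt_6 {T : Type*} [Fintype T] (R X₀ X₁ : T → ℝ)
    (hR : ∀ t, 0 ≤ R t) (h0 : ∀ t, 0 ≤ X₀ t) (h1 : ∀ t, 0 ≤ X₁ t)
    (ε : ℝ) (hε0 : 0 < ε) (hε1 : ε < 1) :
    (ε / (4 * (1 + ε))) *
        ∑ t ∈ univ.filter (fun t => (1 + ε) * X₁ t ≤ X₀ t ∨ X₀ t ≤ (1 - ε) * X₁ t),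
          R t * (X₀ t + X₁ t)
      ≤ (1 / 2) * (∑ t ∈ univ.filter (fun t => (1 + ε) * X₁ t ≤ X₀ t), R t * (X₀ t - X₁ t))
        + (1 / 2) * (∑ t ∈ univ.filter (fun t => X₀ t ≤ (1 - ε) * X₁ t), R t * (X₁ t - X₀ t)) := by
  classical
  have hεpos : (0:ℝ) < 1 + ε := by linarith
  set c : ℝ := ε / (4 * (1 + ε)) with hc
  have hcpos : 0 < c := by positivity
  set P := univ.filter (fun t => (1 + ε) * X₁ t ≤ X₀ t) with hP
  set Q := univ.filter (fun t => X₀ t ≤ (1 - ε) * X₁ t) with hQ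
  have hunion : univ.filter (fun t => (1 + ε) * X₁ t ≤ X₀ t ∨ X₀ t ≤ (1 - ε) * X₁ t)
      = P ∪ Q := by
    ext t; simp [hP, hQ]
  have hf : ∀ t, 0 ≤ R t * (X₀ t + X₁ t) := fun t => by
    have := hR t; have := h0 t; have := h1 t; nlinarith
  have hsplit : ∑ t ∈ P ∪ Q, R t * (X₀ t + X₁ t)
      ≤ (∑ t ∈ P, R t * (X₀ t + X₁ t)) + ∑ t ∈ Q, R t * (X₀ t + X₁ t) := by
    have := Finset.sum_union_inter (s₁ := P) (s₂ := Q) (f := fun t => R t * (X₀ t + X₁ t))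
    have hi : 0 ≤ ∑ t ∈ P ∩ Q, R t * (X₀ t + X₁ t) :=
      Finset.sum_nonneg fun t _ => hf t
    linarith
  have hPterm : ∀ t ∈ P, c * (R t * (X₀ t + X₁ t)) ≤ (1/2) * (R t * (X₀ t - X₁ t)) := by
    intro t ht
    have h : (1 + ε) * X₁ t ≤ X₀ t := by simpa [hP] using ht
    have hRt := hR t; have h1t := h1 t
    rw [hc]
    rw [div_mul_eq_mul_div, div_le_iff₀ (by positivity)]
    nlinarith [mul_nonneg hRt (sub_nonneg.2 h), mul_nonneg (mul_nonneg hRt h1t) (mul_pos hε0 hε0).le]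
  have hQterm : ∀ t ∈ Q, c * (R t * (X₀ t + X₁ t)) ≤ (1/2) * (R t * (X₁ t - X₀ t)) := by
    intro t ht
    have h : X₀ t ≤ (1 - ε) * X₁ t := by simpa [hQ] using ht
    have hRt := hR t; have h1t := h1 t; have h0t := h0 t
    rw [hc]
    rw [div_mul_eq_mul_div, div_le_iff₀ (by positivity)]
    nlinarith [mul_nonneg hRt (sub_nonneg.2 h), mul_nonneg (mul_nonneg hRt h1t) (mul_pos hε0 hε0).le]
  calc c * ∑ t ∈ univ.filter (fun t => (1 + ε) * X₁ t ≤ X₀ t ∨ X₀ t ≤ (1 - ε) * X₁ t),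
          R t * (X₀ t + X₁ t)
      ≤ c * ((∑ t ∈ P, R t * (X₀ t + X₁ t)) + ∑ t ∈ Q, R t * (X₀ t + X₁ t)) := by
        rw [hunion]; exact mul_le_mul_of_nonneg_left hsplit hcpos.le
    _ = (∑ t ∈ P, c * (R t * (X₀ t + X₁ t))) + ∑ t ∈ Q, c * (R t * (X₀ t + X₁ t)) := by
        rw [mul_add, Finset.mul_sum, Finset.mul_sum]
    _ ≤ (∑ t ∈ P, (1/2) * (R t * (X₀ t - X₁ t))) + ∑ t ∈ Q, (1/2) * (R t * (X₁ t - X₀ t)) := by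
        exact add_le_add (Finset.sum_le_sum hPterm) (Finset.sum_le_sum hQterm)
    _ = (1 / 2) * (∑ t ∈ P, R t * (X₀ t - X₁ t)) + (1 / 2) * (∑ t ∈ Q, R t * (X₁ t - X₀ t)) := by
        rw [Finset.mul_sum, Finset.mul_sum]
end

section
/- Let T be a finite index set, let R, X₀, X₁ : T → ℝ be nonnegative functions, and let ε be a real number with 0 < ε < 1. Define T_good = {t ∈ T : (1−ε)·X₁(t) < X₀(t) < (1+ε)·X₁(t)}. Then Σ_{t∈T_good} R(t)·(X₀(t) + X₁(t)) ≥ Σ_{t∈T} R(t)·(X₀(t) + X₁(t)) − (2(1+ε)/ε)·Σ_{t∈T} R(t)·|X₀(t) − X₁(t)|. -/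
open Finset

/-- Balanced transcripts carry all but a small fraction of the total mass: the mass of
`T_good` is at least the total mass minus `(2(1+ε)/ε)` times the statistical-distance term. -/
theorem stmt_7 {T : Type*} [Fintype T] (R X₀ X₁ : T → ℝ)
    (hR : ∀ t, 0 ≤ R t) (h0 : ∀ t, 0 ≤ X₀ t) (h1 : ∀ t, 0 ≤ X₁ t)
    (ε : ℝ) (hε0 : 0 < ε) (hε1 : ε < 1) :
    (∑ t : T, R t * (X₀ t + X₁ t))
        - (2 * (1 + ε) / ε) * ∑ t : T, R t * |X₀ t - X₁ t|
      ≤ ∑ t ∈ univ.filter (fun t => (1 - ε) * X₁ t < X₀ t ∧ X₀ t < (1 + ε) * X₁ t),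
          R t * (X₀ t + X₁ t) := by
  set P : T → Prop := fun t => (1 - ε) * X₁ t < X₀ t ∧ X₀ t < (1 + ε) * X₁ t with hP
  have hsplit := Finset.sum_filter_add_sum_filter_not (univ : Finset T) P
    (fun t => R t * (X₀ t + X₁ t))
  have key : ∀ t, ¬ P t → R t * (X₀ t + X₁ t) ≤ (2 * (1 + ε) / ε) * (R t * |X₀ t - X₁ t|) := by
    intro t hnp
    have hεpos : (0:ℝ) < 1 + ε := by linarith
    rcases not_and_or.mp hnp with h | h
    · -- X₀ t ≤ (1-ε) X₁ t
      push_neg at h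
      have hd : ε * X₁ t ≤ |X₀ t - X₁ t| := by
        rw [abs_sub_comm, abs_of_nonneg (by nlinarith [h1 t])]
        nlinarith [h1 t]
      have hsum : X₀ t + X₁ t ≤ 2 * X₁ t := by nlinarith [h1 t]
      have h2 : X₀ t + X₁ t ≤ (2 * (1 + ε) / ε) * |X₀ t - X₁ t| := by
        rw [div_mul_eq_mul_div, le_div_iff₀ hε0]
        nlinarith [abs_nonneg (X₀ t - X₁ t)]
      calc R t * (X₀ t + X₁ t) ≤ R t * ((2 * (1 + ε) / ε) * |X₀ t - X₁ t|) :=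
            mul_le_mul_of_nonneg_left h2 (hR t)
        _ = (2 * (1 + ε) / ε) * (R t * |X₀ t - X₁ t|) := by ring
    · -- (1+ε) X₁ t ≤ X₀ t
      push_neg at h
      have hd : ε * X₁ t ≤ |X₀ t - X₁ t| := by
        rw [abs_of_nonneg (by nlinarith [h1 t])]
        nlinarith [h1 t]
      have hX1 : X₁ t ≤ X₀ t := by nlinarith [h1 t]
      have hX0 : ε * X₀ t ≤ (1 + ε) * |X₀ t - X₁ t| := by
        rw [abs_of_nonneg (by nlinarith [h1 t])]
        nlinarith [h1 t]
      have h2 : X₀ t + X₁ t ≤ (2 * (1 + ε) / ε) * |X₀ t - X₁ t| := by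
        rw [div_mul_eq_mul_div, le_div_iff₀ hε0]
        nlinarith [abs_nonneg (X₀ t - X₁ t)]
      calc R t * (X₀ t + X₁ t) ≤ R t * ((2 * (1 + ε) / ε) * |X₀ t - X₁ t|) :=
            mul_le_mul_of_nonneg_left h2 (hR t)
        _ = (2 * (1 + ε) / ε) * (R t * |X₀ t - X₁ t|) := by ring
  have hbad : ∑ t ∈ univ.filter (fun t => ¬ P t), R t * (X₀ t + X₁ t)
      ≤ (2 * (1 + ε) / ε) * ∑ t : T, R t * |X₀ t - X₁ t| := by
    rw [Finset.mul_sum]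
    calc ∑ t ∈ univ.filter (fun t => ¬ P t), R t * (X₀ t + X₁ t)
        ≤ ∑ t ∈ univ.filter (fun t => ¬ P t), (2 * (1 + ε) / ε) * (R t * |X₀ t - X₁ t|) := by
          apply Finset.sum_le_sum
          intro t ht
          exact key t (Finset.mem_filter.mp ht).2
      _ ≤ ∑ t : T, (2 * (1 + ε) / ε) * (R t * |X₀ t - X₁ t|) := by
          apply Finset.sum_le_sum_of_subset_of_nonneg (Finset.filter_subset _ _)
          intro t _ _
          have : (0:ℝ) ≤ 2 * (1 + ε) / ε := by positivity
          exact mul_nonneg this (mul_nonneg (hR t) (abs_nonneg _))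
  linarith [hsplit]
end

section
/- Let X be a finite set with |X| ≥ 2, let k be a positive integer, let Y be a finite set with |Y| = k, and let (h_i)_{i∈I} be a pairwise-independent hash family from X to Y indexed by a nonempty finite set I. Let ε be a real number with 0 < ε < 1, and let S ⊆ X be a subset satisfying k ≤ 2|S| ≤ (1+ε)·k. Then for every y ∈ Y, the fraction of indices i ∈ I for which S ∩ h_i⁻¹(y) has exactly one element is at least (1−ε²)/4; that is, |{i ∈ I : |S ∩ h_i⁻¹(y)| = 1}| ≥ |I| · (1−ε²)/4. -/
open Finset

/-- If the range size `k` is a factor-`(1+ε)` approximation of `2|S|`, then a pairwise-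
independent hash maps exactly one element of `S` to any fixed `y` with probability at
least `(1−ε²)/4`. -/
theorem stmt_8 {X Y I : Type*} [Fintype X] [Fintype Y] [Fintype I]
    [DecidableEq X] [DecidableEq Y]
    [Nonempty X] [Nonempty Y] [Nonempty I]
    (hX : 2 ≤ Fintype.card X)
    (k : ℕ) (hk : 0 < k) (hY : Fintype.card Y = k)
    (h : I → X → Y)
    (hpair : ∀ x x' : X, x ≠ x' → ∀ y y' : Y,
      (univ.filter (fun i : I => h i x = y ∧ h i x' = y')).card * (Fintype.card Y) ^ 2
        = Fintype.card I)
    (ε : ℝ) (hε0 : 0 < ε) (hε1 : ε < 1)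
    (S : Finset X)
    (hS1 : (k : ℝ) ≤ 2 * (S.card : ℝ))
    (hS2 : 2 * (S.card : ℝ) ≤ (1 + ε) * (k : ℝ)) :
    ∀ y : Y,
      (Fintype.card I : ℝ) * ((1 - ε ^ 2) / 4)
        ≤ ((univ.filter (fun i : I => (S.filter (fun x => h i x = y)).card = 1)).card : ℝ) := by
  intro y
  classical
  set N := Fintype.card I with hN
  -- pairwise count
  have hpair' : ∀ x x' : X, x ≠ x' →
      (univ.filter (fun i : I => h i x = y ∧ h i x' = y)).card * k ^ 2 = N := by
    intro x x' hxx'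
    have := hpair x x' hxx' y y
    rwa [hY] at this
  -- single-point count
  have hsingle : ∀ x : X, (univ.filter (fun i : I => h i x = y)).card * k = N := by
    intro x
    obtain ⟨x', hx'⟩ := Fintype.exists_ne_of_one_lt_card (by omega) x
    have hcard : (univ.filter (fun i : I => h i x = y)).card
        = ∑ y' : Y, (univ.filter (fun i : I => h i x = y ∧ h i x' = y')).card := by
      rw [Finset.card_eq_sum_card_fiberwise (f := fun i => h i x') (t := univ) (by simp)]
      congr 1; ext y'
      rw [Finset.filter_filter]
    have hkey : (univ.filter (fun i : I => h i x = y)).card * k ^ 2 = k * N := by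
      rw [hcard, Finset.sum_mul]
      have heach : ∀ y' : Y, (univ.filter (fun i : I => h i x = y ∧ h i x' = y')).card * k ^ 2 = N := by
        intro y'
        have := hpair x x' (fun hc => hx' hc.symm) y y'
        rwa [hY] at this
      calc ∑ y' : Y, (univ.filter (fun i : I => h i x = y ∧ h i x' = y')).card * k ^ 2
          = ∑ _y' : Y, N := by exact Finset.sum_congr rfl (fun y' _ => heach y')
        _ = k * N := by simp [Finset.sum_const, Finset.card_univ, hY, smul_eq_mul]
    have : ((univ.filter (fun i : I => h i x = y)).card * k) * k = N * k := by
      rw [mul_assoc, ← pow_two, hkey]; ring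
    exact Nat.eq_of_mul_eq_mul_right hk this
  set T := univ.filter (fun i : I => (S.filter (fun x => h i x = y)).card = 1) with hT
  set U : X → Finset I := fun x =>
    univ.filter (fun i : I => h i x = y ∧ (S.filter (fun x => h i x = y)).card = 1) with hU
  -- disjointness of U on S
  have hdisj : ∀ x ∈ S, ∀ x' ∈ S, x ≠ x' → Disjoint (U x) (U x') := by
    intro x hx x' hx' hxx'
    rw [Finset.disjoint_left]
    intro i hi hi'
    simp only [hU, Finset.mem_filter] at hi hi'
    have h1 : x ∈ S.filter (fun x => h i x = y) := Finset.mem_filter.mpr ⟨hx, hi.2.1⟩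
    have h2 : x' ∈ S.filter (fun x => h i x = y) := Finset.mem_filter.mpr ⟨hx', hi'.2.1⟩
    have : 1 < (S.filter (fun x => h i x = y)).card :=
      Finset.one_lt_card.mpr ⟨x, h1, x', h2, hxx'⟩
    omega
  have hsub : S.biUnion U ⊆ T := by
    intro i hi
    obtain ⟨x, _, hx⟩ := Finset.mem_biUnion.mp hi
    simp only [hU, Finset.mem_filter] at hx
    exact Finset.mem_filter.mpr ⟨Finset.mem_univ i, hx.2.2⟩
  have hsum_le : ∑ x ∈ S, (U x).card ≤ T.card := by
    rw [← Finset.card_biUnion hdisj]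
    exact Finset.card_le_card hsub
  -- inclusion per x ∈ S
  have hincl : ∀ x ∈ S, (univ.filter (fun i : I => h i x = y)).card ≤
      (U x).card + ∑ x' ∈ S.erase x, (univ.filter (fun i : I => h i x = y ∧ h i x' = y)).card := by
    intro x hxS
    have hsub2 : univ.filter (fun i : I => h i x = y) ⊆
        (U x) ∪ (S.erase x).biUnion (fun x' => univ.filter (fun i : I => h i x = y ∧ h i x' = y)) := by
      intro i hi
      have hixy : h i x = y := (Finset.mem_filter.mp hi).2
      by_cases hc : (S.filter (fun x => h i x = y)).card = 1
      · exact Finset.mem_union_left _ (Finset.mem_filter.mpr ⟨Finset.mem_univ i, hixy, hc⟩)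
      · have hxmem : x ∈ S.filter (fun x => h i x = y) := Finset.mem_filter.mpr ⟨hxS, hixy⟩
        have h1 : 1 ≤ (S.filter (fun x => h i x = y)).card := Finset.card_pos.mpr ⟨x, hxmem⟩
        have h2 : 1 < (S.filter (fun x => h i x = y)).card := by omega
        obtain ⟨x'', hx''mem, hx''ne⟩ := Finset.exists_mem_ne h2 x
        have hx''S := Finset.mem_filter.mp hx''mem
        refine Finset.mem_union_right _ (Finset.mem_biUnion.mpr ⟨x'', ?_, ?_⟩)
        · exact Finset.mem_erase.mpr ⟨hx''ne, hx''S.1⟩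
        · exact Finset.mem_filter.mpr ⟨Finset.mem_univ i, hixy, hx''S.2⟩
    calc (univ.filter (fun i : I => h i x = y)).card
        ≤ ((U x) ∪ (S.erase x).biUnion (fun x' => univ.filter (fun i : I => h i x = y ∧ h i x' = y))).card :=
          Finset.card_le_card hsub2
      _ ≤ (U x).card + ((S.erase x).biUnion (fun x' => univ.filter (fun i : I => h i x = y ∧ h i x' = y))).card :=
          Finset.card_union_le _ _
      _ ≤ (U x).card + ∑ x' ∈ S.erase x, (univ.filter (fun i : I => h i x = y ∧ h i x' = y)).card := by
          gcongr; exact Finset.card_biUnion_le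
  -- real versions
  have hk0 : (0:ℝ) < (k:ℝ) := by exact_mod_cast hk
  have hsingleR : ∀ x : X, ((univ.filter (fun i : I => h i x = y)).card : ℝ) = N / k := by
    intro x
    have := hsingle x
    field_simp
    exact_mod_cast this
  have hpairR : ∀ x x' : X, x ≠ x' →
      ((univ.filter (fun i : I => h i x = y ∧ h i x' = y)).card : ℝ) = N / k ^ 2 := by
    intro x x' hxx'
    have := hpair' x x' hxx'
    field_simp
    exact_mod_cast this
  -- lower bound on each U x
  have hUx : ∀ x ∈ S, (N : ℝ) / k - (S.card - 1) * (N / k ^ 2) ≤ ((U x).card : ℝ) := by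
    intro x hxS
    have h1 : ((univ.filter (fun i : I => h i x = y)).card : ℝ) ≤
        ((U x).card : ℝ) + ∑ x' ∈ S.erase x, ((univ.filter (fun i : I => h i x = y ∧ h i x' = y)).card : ℝ) := by
      exact_mod_cast hincl x hxS
    have h2 : ∑ x' ∈ S.erase x, ((univ.filter (fun i : I => h i x = y ∧ h i x' = y)).card : ℝ)
        = (S.card - 1) * (N / k ^ 2) := by
      rw [Finset.sum_congr rfl (fun x' hx' => hpairR x x' (fun hc => ((Finset.mem_erase.mp hx').1 hc.symm)))]
      rw [Finset.sum_const, Finset.card_erase_of_mem hxS, nsmul_eq_mul]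
      have : (1:ℕ) ≤ S.card := Finset.card_pos.mpr ⟨x, hxS⟩
      push_cast [this]
      ring
    rw [hsingleR x] at h1
    linarith [h1, h2.le, h2.ge]
  -- sum up
  have hTlow : (S.card : ℝ) * ((N : ℝ) / k - (S.card - 1) * (N / k ^ 2)) ≤ (T.card : ℝ) := by
    calc (S.card : ℝ) * ((N : ℝ) / k - (S.card - 1) * (N / k ^ 2))
        = ∑ _x ∈ S, ((N : ℝ) / k - (S.card - 1) * (N / k ^ 2)) := by
          rw [Finset.sum_const, nsmul_eq_mul]
      _ ≤ ∑ x ∈ S, ((U x).card : ℝ) := Finset.sum_le_sum hUx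
      _ ≤ (T.card : ℝ) := by exact_mod_cast hsum_le
  -- final arithmetic
  have hN0 : (0:ℝ) ≤ (N:ℝ) := by positivity
  set s : ℝ := (S.card : ℝ) with hs
  have hs0 : (0:ℝ) ≤ s := by positivity
  have key : (N : ℝ) * ((1 - ε ^ 2) / 4) ≤ s * ((N : ℝ) / k - (s - 1) * (N / k ^ 2)) := by
    have h4 : s * ((N : ℝ) / k - (s - 1) * (N / k ^ 2)) = N * (s * k - s * (s-1)) / k ^ 2 := by
      field_simp
    rw [h4, le_div_iff₀ (by positivity)]
    nlinarith [mul_nonneg hN0 (mul_nonneg (by nlinarith : (0:ℝ) ≤ 2*s - (1-ε)*k) (by nlinarith : (0:ℝ) ≤ (1+ε)*k - 2*s)), mul_nonneg hN0 hs0, hk0.le]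
  exact le_trans key hTlow
end
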